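/- If a positive presentation (S,R) satisfies Property H⁺, then for all subsets S', S'' of S, the subgroups satisfy ⟨S'⟩ ∩ ⟨S''⟩ = ⟨S' ∩ S''⟩ in the group ⟨S|R⟩. -/

import Mathlib

namespace ArtinConj

/-- A word over `S ∪ S⁻¹`: a letter is a generator together with a sign
(`true` = positive letter `s`, `false` = negative letter `s⁻¹`). -/
abbrev Word (S : Type) := List (S × Bool)

/-- The positive word associated to a list of generators. -/
def pos {S : Type} (v : List S) : Word S := v.map fun s => (s, true)

/-- The formal inverse of a word. -/
def winv {S : Type} (w : Word S) : Word S := (w.map fun p => (p.1, !p.2)).reverse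

/-- A presentation `(S, R)` is positive if all relations `v = v'` have both
sides nonempty positive words. -/
def Positive {S : Type} (R : Set (List S × List S)) : Prop :=
  ∀ p ∈ R, p.1 ≠ [] ∧ p.2 ≠ []

/-- `v = v'` is a relation of `R` (relations are unoriented). -/
def InR {S : Type} (R : Set (List S × List S)) (v v' : List S) : Prop :=
  (v, v') ∈ R ∨ (v', v) ∈ R

/-- Special transformations of types `0`, `1`, `2ℓ`, `2r` associated with a
positive presentation. -/
inductive Step {S : Type} (R : Set (List S × List S)) : Word S → Word S → Prop
  /-- type 0 : remove a trivial pair `s s⁻¹` or `s⁻¹ s`. -/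
  | free (w₁ w₂ : Word S) (s : S) (e : Bool) :
      Step R (w₁ ++ [(s, e), (s, !e)] ++ w₂) (w₁ ++ w₂)
  /-- type 1 : replace a factor `v` by `v'` for a relation `v = v'`. -/
  | rel (w₁ w₂ : Word S) (v v' : List S) (h : InR R v v') :
      Step R (w₁ ++ pos v ++ w₂) (w₁ ++ pos v' ++ w₂)
  /-- type 1 : replace a factor `v⁻¹` by `v'⁻¹` for a relation `v = v'`. -/
  | relInv (w₁ w₂ : Word S) (v v' : List S) (h : InR R v v') :
      Step R (w₁ ++ winv (pos v) ++ w₂) (w₁ ++ winv (pos v') ++ w₂)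
  /-- type 2r : replace `v⁻¹ v'` by `u u'⁻¹` where `v u = v' u'` is a relation,
  `v, v'` nonempty. -/
  | rev2r (w₁ w₂ : Word S) (v v' u u' : List S) (hv : v ≠ []) (hv' : v' ≠ [])
      (h : InR R (v ++ u) (v' ++ u')) :
      Step R (w₁ ++ winv (pos v) ++ pos v' ++ w₂) (w₁ ++ pos u ++ winv (pos u') ++ w₂)
  /-- type 2ℓ : replace `v v'⁻¹` by `u⁻¹ u'` where `u v = u' v'` is a relation,
  `v, v'` nonempty. -/
  | rev2l (w₁ w₂ : Word S) (v v' u u' : List S) (hv : v ≠ []) (hv' : v' ≠ [])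
      (h : InR R (u ++ v) (u' ++ v')) :
      Step R (w₁ ++ pos v ++ winv (pos v') ++ w₂) (w₁ ++ winv (pos u) ++ pos u' ++ w₂)

/-- `w ⇝_{0,1,2} w'`. -/
def Rw {S : Type} (R : Set (List S × List S)) : Word S → Word S → Prop :=
  Relation.ReflTransGen (Step R)

/-- Evaluation of a word in a group, given an interpretation of the generators. -/
def evalW {S G : Type} [Group G] (f : S → G) (w : Word S) : G :=
  (w.map fun p => if p.2 then f p.1 else (f p.1)⁻¹).prod

/-- The set of elements of the free group corresponding to the relations of `R`. -/
def rels {S : Type} (R : Set (List S × List S)) : Set (FreeGroup S) :=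
  {x | ∃ p ∈ R, x = evalW FreeGroup.of (pos p.1) * (evalW FreeGroup.of (pos p.2))⁻¹}

/-- The element of the presented group `⟨S | R⟩` represented by a word. -/
def evalG {S : Type} (R : Set (List S × List S)) (w : Word S) :
    PresentedGroup (rels R) :=
  evalW (fun s => (PresentedGroup.of s : PresentedGroup (rels R))) w

/-- Property `H` : every word representing `1` can be transformed to the empty
word using special transformations of types `0`, `1`, `2` only. -/
def PropertyH {S : Type} (R : Set (List S × List S)) : Prop :=
  ∀ w : Word S, evalG R w = 1 → Rw R w []


/-- The subgroup of `⟨S | R⟩` generated by (the images of) a subset `S' ⊆ S`. -/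
def SG {S : Type} (R : Set (List S × List S)) (S' : Set S) :
    Subgroup (PresentedGroup (rels R)) :=
  Subgroup.closure {x | ∃ s ∈ S', x = (PresentedGroup.of s : PresentedGroup (rels R))}

/-- `T` is a left-`H`-transversal containing `1`. -/
def IsTransversal {G : Type} [Group G] (H : Subgroup G) (T : Set G) : Prop :=
  (1 : G) ∈ T ∧ ∀ g : G, ∃! t : G, t ∈ T ∧ ∃ h ∈ H, t = g * h

/-- The word `w` only involves letters `s` or `s⁻¹` with `s ∈ S'`. -/
def Supported {S : Type} (S' : Set S) (w : Word S) : Prop :=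
  ∀ p ∈ w, p.1 ∈ S'

/-- Property `H⁺` with respect to the `S`-sequence of transversals `T`: for all
`S', S₀ ⊆ S` and every word `w` whose class lies in `⟨S'⟩`, there are words `v`
over `S' ∪ S'⁻¹` and `u` over `(S' ∩ S₀) ∪ (S' ∩ S₀)⁻¹` with `w ⇝_{0,1,2} v u`
and the class of `v` in `T(S₀)`. -/
def PropertyHPlus {S : Type} (R : Set (List S × List S))
    (T : Set S → Set (PresentedGroup (rels R))) : Prop :=
  ∀ (S' S₀ : Set S) (w : Word S), evalG R w ∈ SG R S' →
    ∃ v u : Word S, Supported S' v ∧ Supported (S' ∩ S₀) u ∧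
      Rw R w (v ++ u) ∧ evalG R v ∈ T S₀


section Aux

variable {S : Type} {G H : Type} [Group G] [Group H]

theorem evalW_append (f : S → G) (w₁ w₂ : Word S) :
    evalW f (w₁ ++ w₂) = evalW f w₁ * evalW f w₂ := by
  simp [evalW]

theorem evalW_winv (f : S → G) (w : Word S) :
    evalW f (winv w) = (evalW f w)⁻¹ := by
  induction w with
  | nil => simp [evalW, winv]
  | cons p t ih =>
    have h1 : winv (p :: t) = winv t ++ [(p.1, !p.2)] := by simp [winv]
    have h2 : evalW f (p :: t) = (if p.2 then f p.1 else (f p.1)⁻¹) * evalW f t := by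
      simp [evalW]
    rw [h1, evalW_append, ih, h2, mul_inv_rev]
    congr 1
    cases p.2 <;> simp [evalW]

theorem evalW_hom (φ : G →* H) (f : S → G) (w : Word S) :
    evalW (fun s => φ (f s)) w = φ (evalW f w) := by
  induction w with
  | nil => simp [evalW]
  | cons p t ih =>
    have h1 : evalW (fun s => φ (f s)) (p :: t)
        = (if p.2 then φ (f p.1) else (φ (f p.1))⁻¹) * evalW (fun s => φ (f s)) t := by
      simp [evalW]
    have h2 : evalW f (p :: t) = (if p.2 then f p.1 else (f p.1)⁻¹) * evalW f t := by
      simp [evalW]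
    rw [h1, h2, map_mul, ih]
    cases p.2 <;> simp

theorem evalG_eq_mk (R : Set (List S × List S)) (w : Word S) :
    evalG R w = PresentedGroup.mk (rels R) (evalW FreeGroup.of w) := by
  rw [evalG, ← evalW_hom (PresentedGroup.mk (rels R)) FreeGroup.of w]
  rfl

theorem mk_rels_eq_one (R : Set (List S × List S)) {x : FreeGroup S} (hx : x ∈ rels R) :
    PresentedGroup.mk (rels R) x = 1 := by
  have : x ∈ Subgroup.normalClosure (rels R) := Subgroup.subset_normalClosure hx
  exact (QuotientGroup.eq_one_iff x).mpr this

theorem evalG_rel (R : Set (List S × List S)) {v v' : List S} (h : InR R v v') :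
    evalG R (pos v) = evalG R (pos v') := by
  rcases h with h | h
  · have : evalW FreeGroup.of (pos v) * (evalW FreeGroup.of (pos v'))⁻¹ ∈ rels R :=
      ⟨(v, v'), h, rfl⟩
    have h1 := mk_rels_eq_one R this
    rw [map_mul, map_inv] at h1
    rw [evalG_eq_mk, evalG_eq_mk]
    exact mul_inv_eq_one.mp h1
  · have : evalW FreeGroup.of (pos v') * (evalW FreeGroup.of (pos v))⁻¹ ∈ rels R :=
      ⟨(v', v), h, rfl⟩
    have h1 := mk_rels_eq_one R this
    rw [map_mul, map_inv] at h1
    rw [evalG_eq_mk, evalG_eq_mk]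
    exact (mul_inv_eq_one.mp h1).symm

theorem evalG_append (R : Set (List S × List S)) (w₁ w₂ : Word S) :
    evalG R (w₁ ++ w₂) = evalG R w₁ * evalG R w₂ := evalW_append _ _ _

theorem evalG_winv (R : Set (List S × List S)) (w : Word S) :
    evalG R (winv w) = (evalG R w)⁻¹ := evalW_winv _ _

theorem step_evalG (R : Set (List S × List S)) {w w' : Word S} (h : Step R w w') :
    evalG R w = evalG R w' := by
  cases h with
  | free w₁ w₂ s e =>
    simp only [evalG_append]
    have : evalG R [(s, e), (s, !e)] = 1 := by
      cases e <;> simp [evalG, evalW]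
    rw [this, mul_one]
  | rel w₁ w₂ v v' hr =>
    simp only [evalG_append, evalG_rel R hr]
  | relInv w₁ w₂ v v' hr =>
    simp only [evalG_append, evalG_winv, evalG_rel R hr]
  | rev2r w₁ w₂ v v' u u' hv hv' hr =>
    have h1 := evalG_rel R hr
    rw [show pos (v ++ u) = pos v ++ pos u by simp [pos],
        show pos (v' ++ u') = pos v' ++ pos u' by simp [pos],
        evalG_append, evalG_append] at h1
    simp only [evalG_append, evalG_winv]
    have key : (evalG R (pos v))⁻¹ * evalG R (pos v') = evalG R (pos u) * (evalG R (pos u'))⁻¹ := by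
      rw [inv_mul_eq_iff_eq_mul, ← mul_assoc, h1, mul_inv_cancel_right]
    calc evalG R w₁ * (evalG R (pos v))⁻¹ * evalG R (pos v') * evalG R w₂
        = evalG R w₁ * ((evalG R (pos v))⁻¹ * evalG R (pos v')) * evalG R w₂ := by group
      _ = evalG R w₁ * (evalG R (pos u) * (evalG R (pos u'))⁻¹) * evalG R w₂ := by rw [key]
      _ = evalG R w₁ * evalG R (pos u) * (evalG R (pos u'))⁻¹ * evalG R w₂ := by group
  | rev2l w₁ w₂ v v' u u' hv hv' hr =>
    have h1 := evalG_rel R hr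
    rw [show pos (u ++ v) = pos u ++ pos v by simp [pos],
        show pos (u' ++ v') = pos u' ++ pos v' by simp [pos],
        evalG_append, evalG_append] at h1
    simp only [evalG_append, evalG_winv]
    have key : evalG R (pos v) * (evalG R (pos v'))⁻¹ = (evalG R (pos u))⁻¹ * evalG R (pos u') := by
      rw [eq_comm, inv_mul_eq_iff_eq_mul, ← mul_assoc, h1, mul_inv_cancel_right]
    calc evalG R w₁ * evalG R (pos v) * (evalG R (pos v'))⁻¹ * evalG R w₂
        = evalG R w₁ * (evalG R (pos v) * (evalG R (pos v'))⁻¹) * evalG R w₂ := by group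
      _ = evalG R w₁ * ((evalG R (pos u))⁻¹ * evalG R (pos u')) * evalG R w₂ := by rw [key]
      _ = evalG R w₁ * (evalG R (pos u))⁻¹ * evalG R (pos u') * evalG R w₂ := by group

theorem rw_evalG (R : Set (List S × List S)) {w w' : Word S} (h : Rw R w w') :
    evalG R w = evalG R w' := by
  induction h with
  | refl => rfl
  | tail _ hstep ih => exact ih.trans (step_evalG R hstep)

theorem supported_mem_SG (R : Set (List S × List S)) {S' : Set S} {w : Word S}
    (h : Supported S' w) : evalG R w ∈ SG R S' := by
  induction w with
  | nil => simp [evalG, evalW]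
  | cons p t ih =>
    have hlet : (PresentedGroup.of p.1 : PresentedGroup (rels R)) ∈ SG R S' :=
      Subgroup.subset_closure ⟨p.1, h p (List.mem_cons_self), rfl⟩
    have h1 : evalG R (p :: t) = (if p.2 then (PresentedGroup.of p.1 : PresentedGroup (rels R))
        else (PresentedGroup.of p.1 : PresentedGroup (rels R))⁻¹) * evalG R t := by
      simp [evalG, evalW]
    rw [h1]
    refine Subgroup.mul_mem _ ?_ (ih fun q hq => h q (List.mem_cons_of_mem _ hq))
    cases p.2 <;> simp [hlet, Subgroup.inv_mem _ hlet]

theorem exists_word (R : Set (List S × List S)) (g : PresentedGroup (rels R)) :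
    ∃ w : Word S, evalG R w = g := by
  classical
  obtain ⟨x, rfl⟩ := PresentedGroup.mk_surjective (rels R) g
  refine ⟨x.toWord, ?_⟩
  rw [evalG_eq_mk]
  congr 1
  have : evalW FreeGroup.of x.toWord = FreeGroup.lift FreeGroup.of (FreeGroup.mk x.toWord) := by
    rw [FreeGroup.lift_mk]
    simp only [evalW]
    congr 1
    apply List.map_congr_left
    intro a _
    cases a.2 <;> simp
  rw [this, FreeGroup.mk_toWord, FreeGroup.lift_of_apply]

theorem SG_mono (R : Set (List S × List S)) {A B : Set S} (h : A ⊆ B) :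
    SG R A ≤ SG R B :=
  Subgroup.closure_mono fun _ ⟨s, hs, he⟩ => ⟨s, h hs, he⟩

end Aux

/-- if a positive presentation `(S, R)` satisfies Property `H⁺`
(with respect to some `S`-sequence of transversals), then for all subsets
`S', S''` of `S` one has `⟨S'⟩ ⊓ ⟨S''⟩ = ⟨S' ∩ S''⟩` in `⟨S | R⟩`. -/
theorem subgroup_intersection_of_propertyHPlus {S : Type}
    (R : Set (List S × List S)) (hpos : Positive R)
    (T : Set S → Set (PresentedGroup (rels R)))
    (hT : ∀ S₀ : Set S, IsTransversal (SG R S₀) (T S₀))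
    (hHp : PropertyHPlus R T)
    (S' S'' : Set S) :
    SG R S' ⊓ SG R S'' = SG R (S' ∩ S'') := by
  apply le_antisymm
  · intro g hg
    obtain ⟨hg1, hg2⟩ := hg
    obtain ⟨w, hw⟩ := exists_word R g
    obtain ⟨v, u, hv, hu, hrw, hvT⟩ := hHp S' S'' w (hw ▸ hg1)
    have heq : g = evalG R v * evalG R u := by
      rw [← hw, rw_evalG R hrw, evalG_append]
    have huMem : evalG R u ∈ SG R (S' ∩ S'') := supported_mem_SG R hu
    have hvMem : evalG R v ∈ SG R S'' := by
      have : evalG R v = g * (evalG R u)⁻¹ := by rw [heq]; group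
      rw [this]
      exact Subgroup.mul_mem _ hg2
        (Subgroup.inv_mem _ (SG_mono R Set.inter_subset_right huMem))
    have hv1 : evalG R v = 1 := by
      obtain ⟨t, _, huniq⟩ := (hT S'').2 1
      have h1 : evalG R v = t :=
        huniq _ ⟨hvT, evalG R v, hvMem, by rw [one_mul]⟩
      have h2 : (1 : PresentedGroup (rels R)) = t :=
        huniq _ ⟨(hT S'').1, 1, Subgroup.one_mem _, by rw [one_mul]⟩
      rw [h1, ← h2]
    rw [heq, hv1, one_mul]
    exact huMem
  · exact le_inf (SG_mono R Set.inter_subset_left) (SG_mono R Set.inter_subset_right)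


end ArtinConj
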